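/- Let (Ω, 𝓕, μ) be a probability space with Ω a nonempty standard Borel space, and let 𝒲, 𝒵, 𝒰, 𝒳 be standard Borel spaces. Let W : Ω → 𝒲, Z : Ω → 𝒵, U : Ω → 𝒰 be measurable random variables such that U is independent of the pair (W, Z), and let g : 𝒲 × 𝒰 → 𝒳 be measurable. Then X := g(W, U) and Z are conditionally independent given the σ-algebra generated by W (i.e., CondIndepFun holds for X and Z given σ(W)). -/

import Mathlib

open MeasureTheory ProbabilityTheory

/-- Auxiliary: if `T` is independent of every `m₂`-measurable set, `V` is `m₂`-measurable,
and `m' ≤ m₂`, then `μ⟦T ∩ V | m'⟧ = μ T * μ⟦V | m'⟧` a.e. -/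
lemma aux_condexp_inter {Ω : Type*} {m' m₂ : MeasurableSpace Ω} [mΩ : MeasurableSpace Ω]
    (hm' : m' ≤ mΩ) (hm'2 : m' ≤ m₂) (hm₂ : m₂ ≤ mΩ)
    (μ : Measure Ω) [IsProbabilityMeasure μ]
    {T V : Set Ω} (hT : MeasurableSet T) (hV : MeasurableSet[m₂] V)
    (hind : ∀ V', MeasurableSet[m₂] V' → μ (T ∩ V') = μ T * μ V') :
    (μ⟦T ∩ V | m'⟧) =ᵐ[μ] fun ω => (μ T).toReal * (μ⟦V | m'⟧) ω := by
  have hVmΩ : MeasurableSet V := hm₂ _ hV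
  have hTV : MeasurableSet (T ∩ V) := hT.inter hVmΩ
  have hint : Integrable ((T ∩ V).indicator (fun _ => (1 : ℝ))) μ :=
    (integrable_const (1 : ℝ)).indicator hTV
  have hintV : Integrable (V.indicator (fun _ => (1 : ℝ))) μ :=
    (integrable_const (1 : ℝ)).indicator hVmΩ
  refine (ae_eq_condExp_of_forall_setIntegral_eq hm' hint ?_ ?_ ?_).symm
  · intro s _ _
    exact (integrable_condExp.const_mul _).integrableOn
  · intro s hs _
    rw [integral_const_mul, setIntegral_condExp hm' hintV hs,
      setIntegral_indicator hVmΩ, setIntegral_indicator hTV, setIntegral_const,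
      setIntegral_const, smul_eq_mul, smul_eq_mul, mul_one, mul_one,
      show s ∩ (T ∩ V) = T ∩ (s ∩ V) by ext ω; simp [Set.mem_inter_iff]; tauto,
      measureReal_def, measureReal_def,
      hind (s ∩ V) ((hm'2 _ hs).inter hV), ENNReal.toReal_mul]
  · have hsm : AEStronglyMeasurable[m'] (μ[V.indicator (fun _ => (1 : ℝ))|m']) μ :=
      StronglyMeasurable.aestronglyMeasurable stronglyMeasurable_condExp
    exact (AEStronglyMeasurable.const_smul hsm (μ T).toReal).congr
      (Filter.Eventually.of_forall fun ω => by
        simp only [Pi.smul_apply, smul_eq_mul])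

/-- **Substitution lemma for SCMs.** If `U` is independent of the pair `(W, Z)`, then
`X := g (W, U)` is conditionally independent of `Z` given the σ-algebra generated by `W`. -/
theorem scm_substitution_condIndepFun
    {Ω 𝒲 𝒵 𝒰 𝒳 : Type*}
    [MeasurableSpace Ω] [StandardBorelSpace Ω] [Nonempty Ω]
    [MeasurableSpace 𝒲] [StandardBorelSpace 𝒲]
    [MeasurableSpace 𝒵] [StandardBorelSpace 𝒵]
    [MeasurableSpace 𝒰] [StandardBorelSpace 𝒰]
    [MeasurableSpace 𝒳] [StandardBorelSpace 𝒳]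
    (μ : Measure Ω) [IsProbabilityMeasure μ]
    (W : Ω → 𝒲) (Z : Ω → 𝒵) (U : Ω → 𝒰)
    (hW : Measurable W) (hZ : Measurable Z) (hU : Measurable U)
    (hIndep : IndepFun U (fun ω => (W ω, Z ω)) μ)
    (g : 𝒲 × 𝒰 → 𝒳) (hg : Measurable g) :
    CondIndepFun (MeasurableSpace.comap W inferInstance) (hW.comap_le)
      (fun ω => g (W ω, U ω)) Z μ := by
  have hWU : Measurable (fun ω => (W ω, U ω)) := hW.prodMk hU
  have hWZ : Measurable (fun ω => (W ω, Z ω)) := hW.prodMk hZ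
  -- reduce to conditional independence of σ(W,U) and σ(Z)
  rw [condIndepFun_iff_condIndep]
  have hle : MeasurableSpace.comap (fun ω => g (W ω, U ω)) inferInstance
      ≤ MeasurableSpace.comap (fun ω => (W ω, U ω)) inferInstance := by
    rw [show (fun ω => g (W ω, U ω)) = g ∘ (fun ω => (W ω, U ω)) from rfl,
      ← MeasurableSpace.comap_comp]
    exact MeasurableSpace.comap_mono hg.comap_le
  refine condIndep_of_condIndep_of_le_left ?_ hle
  have hm'2 : MeasurableSpace.comap W inferInstance
      ≤ MeasurableSpace.comap (fun ω => (W ω, Z ω)) inferInstance := by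
    rw [show W = Prod.fst ∘ (fun ω => (W ω, Z ω)) from rfl, ← MeasurableSpace.comap_comp]
    exact MeasurableSpace.comap_mono measurable_fst.comap_le
  -- π-system argument
  refine CondIndepSets.condIndep (p1 := Set.preimage (fun ω => (W ω, U ω)) ''
      (Set.image2 (· ×ˢ ·) { s : Set 𝒲 | MeasurableSet s } { t : Set 𝒰 | MeasurableSet t }))
    (p2 := Set.preimage Z '' { s : Set 𝒵 | MeasurableSet s })
    hWU.comap_le hZ.comap_le
    (IsPiSystem.comap isPiSystem_prod _)
    (IsPiSystem.comap MeasurableSpace.isPiSystem_measurableSet Z)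
    (by conv_lhs => rw [← generateFrom_prod]
        rw [MeasurableSpace.comap_generateFrom])
    (by conv_lhs => rw [← MeasurableSpace.generateFrom_measurableSet (α := 𝒵)]
        rw [MeasurableSpace.comap_generateFrom])
    ?_
  rw [condIndepSets_iff]
  rotate_left
  · rintro s ⟨st, ⟨A, hA, B, hB, rfl⟩, rfl⟩
    exact hWU (hA.prod hB)
  · rintro s ⟨C, hC, rfl⟩
    exact hZ hC
  rintro t1 t2 ⟨st, ⟨A, hA, B, hB, rfl⟩, rfl⟩ ⟨C, hC, rfl⟩
  -- independence of U⁻¹B from σ(W,Z)-measurable sets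
  have hind : ∀ V', MeasurableSet[MeasurableSpace.comap (fun ω => (W ω, Z ω))
        inferInstance] V' → μ (U ⁻¹' B ∩ V') = μ (U ⁻¹' B) * μ V' := by
    rintro _ ⟨s, hs, rfl⟩
    exact hIndep.measure_inter_preimage_eq_mul B s hB hs
  -- key conditional expectation facts
  have hZC : MeasurableSet[MeasurableSpace.comap (fun ω => (W ω, Z ω)) inferInstance]
      (Z ⁻¹' C) := ⟨Set.univ ×ˢ C, MeasurableSet.univ.prod hC, by ext ω; simp⟩
  have key : (μ⟦U ⁻¹' B ∩ Z ⁻¹' C | MeasurableSpace.comap W inferInstance⟧)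
      =ᵐ[μ] fun ω => (μ (U ⁻¹' B)).toReal *
        (μ⟦Z ⁻¹' C | MeasurableSpace.comap W inferInstance⟧) ω :=
    aux_condexp_inter hW.comap_le hm'2 hWZ.comap_le μ (hU hB) hZC hind
  have keyB : (μ⟦U ⁻¹' B | MeasurableSpace.comap W inferInstance⟧)
      =ᵐ[μ] fun _ => (μ (U ⁻¹' B)).toReal := by
    have h1 := aux_condexp_inter hW.comap_le hm'2 hWZ.comap_le μ (hU hB)
      (MeasurableSet.univ (α := Ω)) hind
    have h2 : (μ⟦(Set.univ : Set Ω) | MeasurableSpace.comap W inferInstance⟧)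
        =ᵐ[μ] fun _ => (1 : ℝ) := by
      rw [Set.indicator_univ]
      exact Filter.EventuallyEq.of_eq (condExp_const hW.comap_le (1 : ℝ))
    rw [Set.inter_univ] at h1
    filter_upwards [h1, h2] with ω h1 h2
    rw [h1, h2, mul_one]
  -- rewrite t1 = W⁻¹A ∩ U⁻¹B
  have ht1 : (fun ω => (W ω, U ω)) ⁻¹' (A ×ˢ B) = W ⁻¹' A ∩ U ⁻¹' B := by
    ext ω; simp
  have hDm' : MeasurableSet[MeasurableSpace.comap W inferInstance] (W ⁻¹' A) := ⟨A, hA, rfl⟩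
  -- pulling out the σ(W)-measurable indicator
  have hpull : ∀ S : Set Ω, MeasurableSet S →
      (μ⟦W ⁻¹' A ∩ S | MeasurableSpace.comap W inferInstance⟧)
        =ᵐ[μ] (W ⁻¹' A).indicator (μ⟦S | MeasurableSpace.comap W inferInstance⟧) := by
    intro S hS
    have h : (W ⁻¹' A ∩ S).indicator (fun _ => (1 : ℝ))
        = (W ⁻¹' A).indicator (S.indicator (fun _ => (1 : ℝ))) := by
      rw [Set.indicator_indicator]
    rw [h]
    exact condExp_indicator ((integrable_const (1 : ℝ)).indicator hS) hDm'
  have hUB : MeasurableSet (U ⁻¹' B) := hU hB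
  have hZCm : MeasurableSet (Z ⁻¹' C) := hZ hC
  have hL : (μ⟦(fun ω => (W ω, U ω)) ⁻¹' (A ×ˢ B) ∩ Z ⁻¹' C |
        MeasurableSpace.comap W inferInstance⟧)
      =ᵐ[μ] (W ⁻¹' A).indicator
        (μ⟦U ⁻¹' B ∩ Z ⁻¹' C | MeasurableSpace.comap W inferInstance⟧) := by
    rw [ht1, Set.inter_assoc]
    exact hpull _ (hUB.inter hZCm)
  have hR : (μ⟦(fun ω => (W ω, U ω)) ⁻¹' (A ×ˢ B) | MeasurableSpace.comap W inferInstance⟧)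
      =ᵐ[μ] (W ⁻¹' A).indicator (μ⟦U ⁻¹' B | MeasurableSpace.comap W inferInstance⟧) := by
    rw [ht1]
    exact hpull _ hUB
  filter_upwards [hL, hR, key, keyB] with ω hLω hRω keyω keyBω
  rw [Pi.mul_apply, hLω, hRω]
  by_cases hω : ω ∈ W ⁻¹' A
  · rw [Set.indicator_of_mem hω, Set.indicator_of_mem hω, keyω, keyBω]
  · rw [Set.indicator_of_notMem hω, Set.indicator_of_notMem hω, zero_mul]
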